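/- Let P be a symmetric positive semidefinite real M×M matrix solving the generalized algebraic Riccati equation ĀᵀP + PĀ + Q − PB̄R⁻¹B̄ᵀP + PD̄Γ⁻¹D̄ᵀP = 0. Let w : ℝ → ℝ^{k₂} be continuous and let δ : ℝ → ℝ^M be differentiable with δ'(t) = (Ā − B̄R⁻¹B̄ᵀP)δ(t) + D̄w(t) for all t. Define u*(t) := −R⁻¹B̄ᵀPδ(t). Then the bounded L₂-gain condition holds: for every T ≥ 0, ∫₀ᵀ (δ(t)ᵀQδ(t) + u*(t)ᵀRu*(t)) dt ≤ ∫₀ᵀ w(t)ᵀΓw(t) dt + δ(0)ᵀPδ(0). -/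

import Mathlib

open Matrix intervalIntegral

namespace L2GainAux

lemma dot_symm {m n : ℕ} (A : Matrix (Fin m) (Fin n) ℝ) (x : Fin m → ℝ) (y : Fin n → ℝ) :
    x ⬝ᵥ A *ᵥ y = (Aᵀ *ᵥ x) ⬝ᵥ y := by
  rw [Matrix.dotProduct_mulVec, Matrix.mulVec_transpose]

lemma dmv {m n p : ℕ} (A : Matrix (Fin m) (Fin n) ℝ) (B : Matrix (Fin m) (Fin p) ℝ)
    (x : Fin n → ℝ) (y : Fin p → ℝ) :
    (A *ᵥ x) ⬝ᵥ (B *ᵥ y) = x ⬝ᵥ ((Aᵀ * B) *ᵥ y) := by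
  rw [dot_symm B (A *ᵥ x) y, Matrix.mulVec_mulVec,
      dot_symm (Aᵀ * B) x y, Matrix.transpose_mul, Matrix.transpose_transpose]

lemma hasDerivAt_quad {m : ℕ} (P : Matrix (Fin m) (Fin m) ℝ) (δ : ℝ → Fin m → ℝ)
    (v : Fin m → ℝ) (t : ℝ) (h : HasDerivAt δ v t) :
    HasDerivAt (fun s => δ s ⬝ᵥ P *ᵥ δ s) (v ⬝ᵥ P *ᵥ δ t + δ t ⬝ᵥ P *ᵥ v) t := by
  have hc : ∀ i, HasDerivAt (fun s => δ s i) (v i) t := hasDerivAt_pi.mp h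
  have h1 : ∀ i, HasDerivAt (fun s => (P *ᵥ δ s) i) ((P *ᵥ v) i) t := by
    intro i
    simpa [Matrix.mulVec, dotProduct] using
      HasDerivAt.fun_sum (fun j (_ : j ∈ Finset.univ) => (hc j).const_mul (P i j))
  have h2 : HasDerivAt (fun s => ∑ i, δ s i * (P *ᵥ δ s) i)
      (∑ i, (v i * (P *ᵥ δ t) i + δ t i * (P *ᵥ v) i)) t :=
    HasDerivAt.fun_sum (fun i _ => (hc i).mul (h1 i))
  simpa [dotProduct, Finset.sum_add_distrib] using h2

lemma key_ineq {m k₁ k₂ : ℕ}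
    (Abar : Matrix (Fin m) (Fin m) ℝ) (Bbar : Matrix (Fin m) (Fin k₁) ℝ)
    (Dbar : Matrix (Fin m) (Fin k₂) ℝ)
    (R : Matrix (Fin k₁) (Fin k₁) ℝ) (hR : R.PosDef)
    (Γ : Matrix (Fin k₂) (Fin k₂) ℝ) (hΓ : Γ.PosDef)
    (Q P : Matrix (Fin m) (Fin m) ℝ) (hPs : Pᵀ = P)
    (hGARE : Abarᵀ * P + P * Abar + Q - P * Bbar * R⁻¹ * Bbarᵀ * P
      + P * Dbar * Γ⁻¹ * Dbarᵀ * P = 0)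
    (d : Fin m → ℝ) (v : Fin k₂ → ℝ) :
    d ⬝ᵥ Q *ᵥ d + (-(R⁻¹ * Bbarᵀ * P) *ᵥ d) ⬝ᵥ R *ᵥ (-(R⁻¹ * Bbarᵀ * P) *ᵥ d)
      + (((Abar - Bbar * R⁻¹ * Bbarᵀ * P) *ᵥ d + Dbar *ᵥ v) ⬝ᵥ P *ᵥ d
        + d ⬝ᵥ P *ᵥ ((Abar - Bbar * R⁻¹ * Bbarᵀ * P) *ᵥ d + Dbar *ᵥ v))
      ≤ v ⬝ᵥ Γ *ᵥ v := by
  have hRs : Rᵀ = R := by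
    rw [← R.conjTranspose_eq_transpose_of_trivial]; exact hR.isHermitian
  have hΓs : Γᵀ = Γ := by
    rw [← Γ.conjTranspose_eq_transpose_of_trivial]; exact hΓ.isHermitian
  have hRu : IsUnit R.det := hR.det_pos.ne'.isUnit
  have hΓu : IsUnit Γ.det := hΓ.det_pos.ne'.isUnit
  have hRit : (R⁻¹)ᵀ = R⁻¹ := by rw [Matrix.transpose_nonsing_inv, hRs]
  have hΓit : (Γ⁻¹)ᵀ = Γ⁻¹ := by rw [Matrix.transpose_nonsing_inv, hΓs]
  have hRc : ∀ (Z : Matrix (Fin k₁) (Fin m) ℝ), R⁻¹ * (R * Z) = Z := fun Z => by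
    rw [← Matrix.mul_assoc, Matrix.nonsing_inv_mul R hRu, Matrix.one_mul]
  have hΓc : ∀ (Z : Matrix (Fin k₂) (Fin m) ℝ), Γ * (Γ⁻¹ * Z) = Z := fun Z => by
    rw [← Matrix.mul_assoc, Matrix.mul_nonsing_inv Γ hΓu, Matrix.one_mul]
  have hΓc' : ∀ (Z : Matrix (Fin k₂) (Fin m) ℝ), Γ⁻¹ * (Γ * Z) = Z := fun Z => by
    rw [← Matrix.mul_assoc, Matrix.nonsing_inv_mul Γ hΓu, Matrix.one_mul]
  set q := d ⬝ᵥ Q *ᵥ d with hq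
  set x := d ⬝ᵥ (P * Bbar * R⁻¹ * Bbarᵀ * P) *ᵥ d with hx
  set y := d ⬝ᵥ (P * Dbar * Γ⁻¹ * Dbarᵀ * P) *ᵥ d with hy
  set a1 := d ⬝ᵥ (Abarᵀ * P) *ᵥ d with ha1
  set a2 := d ⬝ᵥ (P * Abar) *ᵥ d with ha2
  set c := v ⬝ᵥ (Dbarᵀ * P) *ᵥ d with hc
  -- the GARE contracted with d
  have h0 : a1 + a2 + q - x + y = 0 := by
    have h := congrArg (fun A : Matrix (Fin m) (Fin m) ℝ => d ⬝ᵥ A *ᵥ d) hGARE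
    simpa only [Matrix.add_mulVec, Matrix.sub_mulVec, dotProduct_add,
      dotProduct_sub, Matrix.zero_mulVec, dotProduct_zero] using h
  -- the control cost term
  have h1 : (-(R⁻¹ * Bbarᵀ * P) *ᵥ d) ⬝ᵥ R *ᵥ (-(R⁻¹ * Bbarᵀ * P) *ᵥ d) = x := by
    rw [Matrix.neg_mulVec, Matrix.mulVec_neg, neg_dotProduct, dotProduct_neg,
      neg_neg, Matrix.mulVec_mulVec, dmv]
    have : (R⁻¹ * Bbarᵀ * P)ᵀ * (R * (R⁻¹ * Bbarᵀ * P)) = P * Bbar * R⁻¹ * Bbarᵀ * P := by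
      simp [Matrix.transpose_mul, hPs, hRit, Matrix.mul_assoc, hRc]
    rw [this]
  -- cross-term equality
  have hcross : d ⬝ᵥ (P * Dbar) *ᵥ v = c := by
    rw [dot_symm, Matrix.transpose_mul, hPs, dotProduct_comm]
  -- the two drift terms
  have h2 : ((Abar - Bbar * R⁻¹ * Bbarᵀ * P) *ᵥ d + Dbar *ᵥ v) ⬝ᵥ P *ᵥ d = a1 - x + c := by
    rw [add_dotProduct, dmv, dmv]
    have e1 : (Abar - Bbar * R⁻¹ * Bbarᵀ * P)ᵀ * P = Abarᵀ * P - P * Bbar * R⁻¹ * Bbarᵀ * P := by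
      simp [Matrix.transpose_sub, Matrix.transpose_mul, hPs, hRit, Matrix.sub_mul,
        Matrix.mul_assoc]
    rw [e1, Matrix.sub_mulVec, dotProduct_sub]
  have h3 : d ⬝ᵥ P *ᵥ ((Abar - Bbar * R⁻¹ * Bbarᵀ * P) *ᵥ d + Dbar *ᵥ v) = a2 - x + c := by
    rw [Matrix.mulVec_add, dotProduct_add, Matrix.mulVec_mulVec, Matrix.mulVec_mulVec,
      hcross]
    have e1 : P * (Abar - Bbar * R⁻¹ * Bbarᵀ * P) = P * Abar - P * Bbar * R⁻¹ * Bbarᵀ * P := by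
      simp [Matrix.mul_sub, Matrix.mul_assoc]
    rw [e1, Matrix.sub_mulVec, dotProduct_sub]
  -- completed square
  set e := v - (Γ⁻¹ * Dbarᵀ * P) *ᵥ d with he
  have h5 : 0 ≤ e ⬝ᵥ Γ *ᵥ e := by simpa using hΓ.posSemidef.dotProduct_mulVec_nonneg e
  have h4 : e ⬝ᵥ Γ *ᵥ e = v ⬝ᵥ Γ *ᵥ v - 2 * c + y := by
    rw [he, Matrix.mulVec_sub, sub_dotProduct, dotProduct_sub,
      dotProduct_sub]
    have e1 : v ⬝ᵥ Γ *ᵥ ((Γ⁻¹ * Dbarᵀ * P) *ᵥ d) = c := by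
      rw [Matrix.mulVec_mulVec]
      have : Γ * (Γ⁻¹ * Dbarᵀ * P) = Dbarᵀ * P := by
        simp [Matrix.mul_assoc, hΓc]
      rw [this]
    have e2 : ((Γ⁻¹ * Dbarᵀ * P) *ᵥ d) ⬝ᵥ Γ *ᵥ v = c := by
      rw [dmv]
      have : (Γ⁻¹ * Dbarᵀ * P)ᵀ * Γ = P * Dbar := by
        simp [Matrix.transpose_mul, hPs, hΓit, Matrix.mul_assoc,
          Matrix.nonsing_inv_mul Γ hΓu]
      rw [this, hcross]
    have e3 : ((Γ⁻¹ * Dbarᵀ * P) *ᵥ d) ⬝ᵥ Γ *ᵥ ((Γ⁻¹ * Dbarᵀ * P) *ᵥ d) = y := by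
      rw [Matrix.mulVec_mulVec, dmv]
      have : (Γ⁻¹ * Dbarᵀ * P)ᵀ * (Γ * (Γ⁻¹ * Dbarᵀ * P)) = P * Dbar * Γ⁻¹ * Dbarᵀ * P := by
        simp [Matrix.transpose_mul, hPs, hΓit, Matrix.mul_assoc, hΓc]
      rw [this]
    rw [e1, e2, e3]; ring
  rw [h1, h2, h3]
  linarith

end L2GainAux

/-- Bounded L₂-gain condition. If the symmetric positive semidefinite
matrix `P` solves the GARE and `δ` solves the closed-loop dynamics
`δ' = (Ā − B̄R⁻¹B̄ᵀP)δ + D̄w` with continuous `w`, then with `u* = −R⁻¹B̄ᵀPδ`,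
for every `T ≥ 0`,
`∫₀ᵀ (δᵀQδ + (u*)ᵀRu*) dt ≤ ∫₀ᵀ wᵀΓw dt + δ(0)ᵀPδ(0)`. -/
theorem bounded_L2_gain
    (M k₁ k₂ : ℕ) (hM : 0 < M) (hk₁ : 0 < k₁) (hk₂ : 0 < k₂)
    (Abar : Matrix (Fin M) (Fin M) ℝ)
    (Bbar : Matrix (Fin M) (Fin k₁) ℝ)
    (Dbar : Matrix (Fin M) (Fin k₂) ℝ)
    (R : Matrix (Fin k₁) (Fin k₁) ℝ) (hR : R.PosDef)
    (Γ : Matrix (Fin k₂) (Fin k₂) ℝ) (hΓ : Γ.PosDef)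
    (Q : Matrix (Fin M) (Fin M) ℝ) (hQ : Q.PosSemidef)
    (P : Matrix (Fin M) (Fin M) ℝ) (hPsd : P.PosSemidef)
    (hGARE : Abarᵀ * P + P * Abar + Q - P * Bbar * R⁻¹ * Bbarᵀ * P
      + P * Dbar * Γ⁻¹ * Dbarᵀ * P = 0)
    (w : ℝ → Fin k₂ → ℝ) (hw : Continuous w)
    (δ : ℝ → Fin M → ℝ)
    (hode : ∀ t : ℝ, HasDerivAt δ
      ((Abar - Bbar * R⁻¹ * Bbarᵀ * P).mulVec (δ t) + Dbar.mulVec (w t)) t)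
    (T : ℝ) (hT : 0 ≤ T) :
    (∫ t in (0 : ℝ)..T,
        (δ t ⬝ᵥ Q.mulVec (δ t)
          + (-(R⁻¹ * Bbarᵀ * P).mulVec (δ t)) ⬝ᵥ
              R.mulVec (-(R⁻¹ * Bbarᵀ * P).mulVec (δ t))))
      ≤ (∫ t in (0 : ℝ)..T, w t ⬝ᵥ Γ.mulVec (w t))
        + δ 0 ⬝ᵥ P.mulVec (δ 0) := by
  classical
  have hPs : Pᵀ = P := by
    rw [← P.conjTranspose_eq_transpose_of_trivial]; exact hPsd.1
  set Acl := Abar - Bbar * R⁻¹ * Bbarᵀ * P with hAcl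
  set f : ℝ → ℝ := fun t => δ t ⬝ᵥ P *ᵥ δ t with hfdef
  set g : ℝ → ℝ := fun t =>
    (Acl *ᵥ δ t + Dbar *ᵥ w t) ⬝ᵥ P *ᵥ δ t
      + δ t ⬝ᵥ P *ᵥ (Acl *ᵥ δ t + Dbar *ᵥ w t) with hgdef
  have hf : ∀ t, HasDerivAt f (g t) t := fun t =>
    L2GainAux.hasDerivAt_quad P δ _ t (hode t)
  have hδc : Continuous δ := continuous_iff_continuousAt.mpr fun t => (hode t).continuousAt
  have hclc : Continuous fun t => Acl *ᵥ δ t + Dbar *ᵥ w t :=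
    (continuous_const.matrix_mulVec hδc).add (continuous_const.matrix_mulVec hw)
  have hgc : Continuous g :=
    (hclc.dotProduct (continuous_const.matrix_mulVec hδc)).add
      (hδc.dotProduct (continuous_const.matrix_mulVec hclc))
  have hLc : Continuous fun t =>
      δ t ⬝ᵥ Q.mulVec (δ t)
        + (-(R⁻¹ * Bbarᵀ * P).mulVec (δ t)) ⬝ᵥ
            R.mulVec (-(R⁻¹ * Bbarᵀ * P).mulVec (δ t)) := by
    have hu : Continuous fun t => -(R⁻¹ * Bbarᵀ * P).mulVec (δ t) :=
      (continuous_const.matrix_mulVec hδc).neg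
    exact (hδc.dotProduct (continuous_const.matrix_mulVec hδc)).add
      (hu.dotProduct (continuous_const.matrix_mulVec hu))
  have hwc : Continuous fun t => w t ⬝ᵥ Γ.mulVec (w t) :=
    hw.dotProduct (continuous_const.matrix_mulVec hw)
  have hFTC : ∫ t in (0 : ℝ)..T, g t = f T - f 0 :=
    intervalIntegral.integral_eq_sub_of_hasDerivAt (fun t _ => hf t)
      (hgc.intervalIntegrable 0 T)
  have hpt : ∀ t ∈ Set.Icc (0 : ℝ) T,
      δ t ⬝ᵥ Q.mulVec (δ t)
        + (-(R⁻¹ * Bbarᵀ * P).mulVec (δ t)) ⬝ᵥ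
            R.mulVec (-(R⁻¹ * Bbarᵀ * P).mulVec (δ t))
      ≤ w t ⬝ᵥ Γ.mulVec (w t) - g t := by
    intro t _
    have h := L2GainAux.key_ineq Abar Bbar Dbar R hR Γ hΓ Q P hPs hGARE (δ t) (w t)
    rw [Matrix.neg_mulVec] at h
    simp only [hgdef, hAcl]
    linarith [h]
  have hmono : (∫ t in (0 : ℝ)..T,
      (δ t ⬝ᵥ Q.mulVec (δ t)
        + (-(R⁻¹ * Bbarᵀ * P).mulVec (δ t)) ⬝ᵥ
            R.mulVec (-(R⁻¹ * Bbarᵀ * P).mulVec (δ t))))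
      ≤ ∫ t in (0 : ℝ)..T, (w t ⬝ᵥ Γ.mulVec (w t) - g t) :=
    intervalIntegral.integral_mono_on hT (hLc.intervalIntegrable 0 T)
      ((hwc.sub hgc).intervalIntegrable 0 T) hpt
  have hsplit : (∫ t in (0 : ℝ)..T, (w t ⬝ᵥ Γ.mulVec (w t) - g t))
      = (∫ t in (0 : ℝ)..T, w t ⬝ᵥ Γ.mulVec (w t)) - ∫ t in (0 : ℝ)..T, g t :=
    intervalIntegral.integral_sub (hwc.intervalIntegrable 0 T) (hgc.intervalIntegrable 0 T)
  have hfT : 0 ≤ f T := by simpa using hPsd.dotProduct_mulVec_nonneg (δ T)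
  have hf0 : f 0 = δ 0 ⬝ᵥ P.mulVec (δ 0) := rfl
  calc (∫ t in (0 : ℝ)..T,
      (δ t ⬝ᵥ Q.mulVec (δ t)
        + (-(R⁻¹ * Bbarᵀ * P).mulVec (δ t)) ⬝ᵥ
            R.mulVec (-(R⁻¹ * Bbarᵀ * P).mulVec (δ t))))
      ≤ (∫ t in (0 : ℝ)..T, w t ⬝ᵥ Γ.mulVec (w t)) - ∫ t in (0 : ℝ)..T, g t := by
        rw [← hsplit]; exact hmono
    _ = (∫ t in (0 : ℝ)..T, w t ⬝ᵥ Γ.mulVec (w t)) - (f T - f 0) := by rw [hFTC]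
    _ ≤ (∫ t in (0 : ℝ)..T, w t ⬝ᵥ Γ.mulVec (w t)) + δ 0 ⬝ᵥ P.mulVec (δ 0) := by
        rw [← hf0]; linarith
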